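/- arXiv:2001.11834 — 3 statements merged into one kernel-verified Lean document; each statement's English description precedes it below -/
import Mathlib

section
/- Let μ be a Borel probability measure on ℝ^d whose support contains an open cube U. If the lower local dimension map x ↦ h_μ(x) is continuous on U, then h_μ is identically equal to d on U. -/
open MeasureTheory Filter Set Metric Topology ENNReal

noncomputable section
open scoped Classical

/-- Euclidean space `ℝ^d`. -/
abbrev Rd (d : ℕ) := EuclideanSpace ℝ (Fin d)

/-- The support of a measure: points all whose balls have positive mass. -/
def msupp {X : Type*} [MetricSpace X] [MeasurableSpace X] (μ : Measure X) : Set X :=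
  {x | ∀ r : ℝ, 0 < r → 0 < μ (ball x r)}

/-- The lower local dimension `h_μ(x) = liminf_{r→0⁺} log μ(B(x,r)) / log r`. -/
def locDim {X : Type*} [MetricSpace X] [MeasurableSpace X] (μ : Measure X) (x : X) : EReal :=
  Filter.liminf
    (fun r : ℝ => ((Real.log (μ (ball x r)).toReal / Real.log r : ℝ) : EReal)) (𝓝[>] 0)

/-- The singularity spectrum `D_μ(H) = dim_H {x ∈ Supp μ : h_μ(x) = H}`,
with the convention `dim ∅ = -∞`. -/
def specM {X : Type*} [MetricSpace X] [MeasurableSpace X] (μ : Measure X) (H : ℝ) : EReal :=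
  if {x | x ∈ msupp μ ∧ locDim μ x = (H : EReal)} = ∅ then ⊥
  else ((dimH {x | x ∈ msupp μ ∧ locDim μ x = (H : EReal)} : ℝ≥0∞) : EReal)

/-- Frostman-type bound: if at every point of `E`, arbitrarily small balls have
mass at least `r ^ s`, then `dimH E ≤ s`. -/
lemma dimH_le_of_frequently_mass_lower_bound {X : Type*} [MetricSpace X]
    [MeasurableSpace X] [BorelSpace X] (μ : Measure X) [IsFiniteMeasure μ]
    (s : ℝ) (E : Set X)
    (hE : ∀ x ∈ E, ∃ᶠ r in 𝓝[>] (0:ℝ), ENNReal.ofReal (r ^ s) ≤ μ (ball x r)) :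
    dimH E ≤ ENNReal.ofReal s := by
  refine dimH_le fun t ht => ?_
  by_contra hts
  push_neg at hts
  have hst : s < (t : ℝ) := by
    by_contra hle
    push_neg at hle
    have h1 : (t : ℝ≥0∞) ≤ ENNReal.ofReal s := by
      rw [← ENNReal.ofReal_coe_nnreal]
      exact ENNReal.ofReal_le_ofReal hle
    exact absurd h1 (not_le.mpr hts)
  -- we show `μH[t] E = 0`, contradicting `ht`
  suffices h0 : μH[(t : ℝ)] E = 0 by
    rw [h0] at ht; exact (ENNReal.zero_ne_top ht).elim
  set δ : ℕ → ℝ := fun n => (1/2 : ℝ) ^ (n + 1) with hδ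
  have hδpos : ∀ n, 0 < δ n := fun n => by positivity
  have hδ1 : ∀ n, δ n ≤ 1 := fun n => by
    rw [hδ]; exact (pow_le_one₀ (by norm_num) (by norm_num))
  have hδ0 : Tendsto δ atTop (𝓝 0) := by
    have := tendsto_pow_atTop_nhds_zero_of_lt_one (by norm_num : (0:ℝ) ≤ 1/2)
      (by norm_num : (1/2:ℝ) < 1)
    exact (this.comp (tendsto_add_atTop_nat 1))
  -- choose good radii at each point and scale
  have hsel : ∀ (n : ℕ) (x : E), ∃ ρ : ℝ, ρ ∈ Ioo (0:ℝ) (δ n) ∧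
      ENNReal.ofReal (ρ ^ s) ≤ μ (ball (x : X) ρ) := by
    intro n x
    have := (hE x x.2).and_eventually
      (Ioo_mem_nhdsGT_of_mem (by constructor <;> simp [hδpos n] : (0:ℝ) ∈ Ico (0:ℝ) (δ n)))
    rcases this.exists with ⟨ρ, h1, h2⟩
    exact ⟨ρ, h2, h1⟩
  choose ρ hρmem hρmass using hsel
  -- Vitali covering
  have hvit : ∀ n : ℕ, ∃ u : Set E,
      (u.PairwiseDisjoint fun a => closedBall (a : X) (ρ n a)) ∧
      ∀ a : E, ∃ b ∈ u, closedBall (a : X) (ρ n a) ⊆ closedBall (b : X) (4 * ρ n b) := by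
    intro n
    rcases Vitali.exists_disjoint_subfamily_covering_enlargement_closedBall univ
      (fun a : E => (a : X)) (ρ n) (δ n) (fun a _ => (hρmem n a).2.le) 4 (by norm_num)
      with ⟨u, _, hd, hc⟩
    exact ⟨u, hd, fun a => by simpa using hc a trivial⟩
  choose u hu1 hu2 using hvit
  -- countability
  have hcnt : ∀ n, (u n).Countable := by
    intro n
    have hd : Pairwise (Function.onFun Disjoint fun b : u n => ball (b : X) (ρ n b)) := by
      intro i j hij
      have := hu1 n i.2 j.2 (fun h => hij (Subtype.ext h))
      exact this.mono ball_subset_closedBall ball_subset_closedBall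
    have := Measure.countable_meas_pos_of_disjoint_iUnion (μ := μ)
      (As := fun b : u n => ball (b : X) (ρ n b)) (fun _ => measurableSet_ball) hd
    have huniv : {i : u n | 0 < μ (ball (i : X) (ρ n i))} = univ := by
      refine eq_univ_of_forall fun i => ?_
      have h1 : (0:ℝ≥0∞) < ENNReal.ofReal ((ρ n i) ^ s) := by
        rw [ENNReal.ofReal_pos]
        exact Real.rpow_pos_of_pos (hρmem n i).1 s
      exact lt_of_lt_of_le h1 (hρmass n i)
    rw [huniv] at this
    exact Set.countable_coe_iff.mp (Set.countable_univ_iff.mp this)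
  haveI : ∀ n, Countable (u n) := fun n => Set.countable_coe_iff.mpr (hcnt n)
  -- apply the Hausdorff-measure covering bound
  have hcov : ∀ n : ℕ, E ⊆ ⋃ (b : u n), closedBall ((b : E) : X) (4 * ρ n (b : E)) := by
    intro n x hx
    rcases hu2 n ⟨x, hx⟩ with ⟨b, hb, hsub⟩
    exact mem_iUnion.mpr ⟨⟨b, hb⟩, hsub (mem_closedBall_self (hρmem n ⟨x, hx⟩).1.le)⟩
  have hbound := MeasureTheory.Measure.hausdorffMeasure_le_liminf_tsum (t : ℝ) E
    (l := atTop) (fun n => ENNReal.ofReal (8 * δ n)) (by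
      rw [show (0:ℝ≥0∞) = ENNReal.ofReal (8 * 0) by simp]
      exact (ENNReal.continuous_ofReal.tendsto _).comp (hδ0.const_mul 8))
    (fun n (b : u n) => closedBall ((b : E) : X) (4 * ρ n (b : E)))
    (by
      filter_upwards with n b
      have h1 : 0 ≤ 4 * ρ n b := by have := (hρmem n (b:E)).1; linarith
      rw [← Metric.emetric_closedBall h1]
      refine le_trans EMetric.diam_closedBall ?_
      have h2 : (2:ℝ≥0∞) * ENNReal.ofReal (4 * ρ n (b:E))
          = ENNReal.ofReal (8 * ρ n (b:E)) := by
        rw [← ENNReal.ofReal_ofNat 2, ← ENNReal.ofReal_mul (by norm_num)]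
        congr 1; ring
      rw [h2]
      apply ENNReal.ofReal_le_ofReal
      have := (hρmem n (b:E)).2.le
      linarith)
    (by filter_upwards with n; exact hcov n)
  -- bound the sums
  have hsum : ∀ n : ℕ, (∑' b : u n,
      EMetric.diam (closedBall ((b : E) : X) (4 * ρ n (b : E))) ^ (t:ℝ))
      ≤ ENNReal.ofReal (8 ^ (t:ℝ) * (δ n) ^ ((t:ℝ) - s)) * μ univ := by
    intro n
    have hterm : ∀ b : u n,
        EMetric.diam (closedBall ((b : E) : X) (4 * ρ n (b : E))) ^ (t:ℝ)
        ≤ ENNReal.ofReal (8 ^ (t:ℝ) * (δ n) ^ ((t:ℝ) - s)) * μ (ball ((b:E):X) (ρ n b)) := by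
      intro b
      have hρpos := (hρmem n b).1
      have hρδ := (hρmem n b).2.le
      have h1 : 0 ≤ 4 * ρ n b := by positivity
      have hd1 : EMetric.diam (closedBall ((b : E) : X) (4 * ρ n (b : E)))
          ≤ ENNReal.ofReal (8 * ρ n b) := by
        rw [← Metric.emetric_closedBall h1]
        refine le_trans EMetric.diam_closedBall ?_
        have h2 : (2:ℝ≥0∞) * ENNReal.ofReal (4 * ρ n (b:E))
            = ENNReal.ofReal (8 * ρ n (b:E)) := by
          rw [← ENNReal.ofReal_ofNat 2, ← ENNReal.ofReal_mul (by norm_num)]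
          congr 1; ring
        rw [h2]
      calc EMetric.diam (closedBall ((b : E) : X) (4 * ρ n (b : E))) ^ (t:ℝ)
          ≤ (ENNReal.ofReal (8 * ρ n b)) ^ (t:ℝ) :=
            ENNReal.rpow_le_rpow hd1 t.2
        _ = ENNReal.ofReal ((8 * ρ n b) ^ (t:ℝ)) :=
            ENNReal.ofReal_rpow_of_pos (by positivity)
        _ ≤ ENNReal.ofReal (8 ^ (t:ℝ) * (δ n) ^ ((t:ℝ) - s) * (ρ n b) ^ s) := by
            apply ENNReal.ofReal_le_ofReal
            rw [Real.mul_rpow (by norm_num) hρpos.le]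
            have hsplit : (ρ n (b:E)) ^ (t:ℝ)
                = (ρ n (b:E)) ^ ((t:ℝ) - s) * (ρ n (b:E)) ^ s := by
              rw [← Real.rpow_add hρpos]; ring_nf
            rw [hsplit]
            have hle : (ρ n (b:E)) ^ ((t:ℝ) - s) ≤ (δ n) ^ ((t:ℝ) - s) :=
              Real.rpow_le_rpow hρpos.le hρδ (by linarith)
            have h2 : (0:ℝ) ≤ (ρ n (b:E)) ^ s := (Real.rpow_pos_of_pos hρpos s).le
            have h8 : (0:ℝ) ≤ (8:ℝ) ^ (t:ℝ) := by positivity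
            calc (8:ℝ) ^ (t:ℝ) * ((ρ n (b:E)) ^ ((t:ℝ)-s) * (ρ n (b:E)) ^ s)
                ≤ (8:ℝ) ^ (t:ℝ) * ((δ n) ^ ((t:ℝ)-s) * (ρ n (b:E)) ^ s) :=
                  mul_le_mul_of_nonneg_left
                    (mul_le_mul_of_nonneg_right hle h2) h8
              _ = 8 ^ (t:ℝ) * (δ n) ^ ((t:ℝ) - s) * (ρ n (b:E)) ^ s := by ring
        _ ≤ ENNReal.ofReal (8 ^ (t:ℝ) * (δ n) ^ ((t:ℝ) - s)) * μ (ball ((b:E):X) (ρ n b)) := by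
            rw [ENNReal.ofReal_mul (by positivity)]
            exact mul_le_mul_right (hρmass n b) _
    calc (∑' b : u n, EMetric.diam (closedBall ((b : E) : X) (4 * ρ n (b : E))) ^ (t:ℝ))
        ≤ ∑' b : u n, ENNReal.ofReal (8 ^ (t:ℝ) * (δ n) ^ ((t:ℝ) - s))
            * μ (ball ((b:E):X) (ρ n b)) := ENNReal.tsum_le_tsum hterm
      _ = ENNReal.ofReal (8 ^ (t:ℝ) * (δ n) ^ ((t:ℝ) - s))
            * ∑' b : u n, μ (ball ((b:E):X) (ρ n b)) := ENNReal.tsum_mul_left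
      _ ≤ ENNReal.ofReal (8 ^ (t:ℝ) * (δ n) ^ ((t:ℝ) - s)) * μ univ := by
          apply mul_le_mul_right
          have hd : Pairwise (Function.onFun Disjoint fun b : u n => ball (b : X) (ρ n b)) := by
            intro i j hij
            have := hu1 n i.2 j.2 (fun h => hij (Subtype.ext h))
            exact this.mono ball_subset_closedBall ball_subset_closedBall
          rw [← measure_iUnion hd (fun _ => measurableSet_ball)]
          exact measure_mono (subset_univ _)
  -- the right-hand side tends to 0
  have hK0 : Tendsto (fun n => ENNReal.ofReal (8 ^ (t:ℝ) * (δ n) ^ ((t:ℝ) - s)) * μ univ)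
      atTop (𝓝 0) := by
    have h1 : Tendsto (fun n => (δ n) ^ ((t:ℝ) - s)) atTop (𝓝 0) := by
      have hc : ContinuousAt (fun y : ℝ => y ^ ((t:ℝ) - s)) 0 :=
        Real.continuousAt_rpow_const 0 _ (Or.inr (by linarith))
      have := hc.tendsto.comp hδ0
      simpa [Function.comp_def, Real.zero_rpow (by linarith : (t:ℝ) - s ≠ 0)] using this
    have h2 : Tendsto (fun n => ENNReal.ofReal (8 ^ (t:ℝ) * (δ n) ^ ((t:ℝ) - s)))
        atTop (𝓝 0) := by
      rw [show (0:ℝ≥0∞) = ENNReal.ofReal (8 ^ (t:ℝ) * 0) by simp]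
      exact (ENNReal.continuous_ofReal.tendsto _).comp (h1.const_mul _)
    simpa using ENNReal.Tendsto.mul_const h2 (Or.inr (measure_ne_top μ univ))
  refine le_antisymm ?_ zero_le
  calc μH[(t:ℝ)] E ≤ liminf (fun n => ∑' b : u n,
        EMetric.diam (closedBall ((b : E) : X) (4 * ρ n (b : E))) ^ (t:ℝ)) atTop := hbound
    _ ≤ liminf (fun n => ENNReal.ofReal (8 ^ (t:ℝ) * (δ n) ^ ((t:ℝ) - s)) * μ univ) atTop :=
        Filter.liminf_le_liminf (Filter.Eventually.of_forall hsum)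
    _ = 0 := hK0.liminf_eq

lemma ae_locDim_le (d : ℕ) (μ : Measure (Rd d)) [IsProbabilityMeasure μ] :
    ∀ᵐ x ∂μ, locDim μ x ≤ ((d : ℝ) : EReal) := by
  filter_upwards [Besicovitch.ae_tendsto_rnDeriv volume μ,
    Measure.rnDeriv_lt_top volume μ] with x hx hL
  set L := (volume : Measure (Rd d)).rnDeriv μ x with hLdef
  have hL1 : L < L + 1 := ENNReal.lt_add_right hL.ne one_ne_zero
  have hLtop : L + 1 ≠ ∞ := by
    simp [ENNReal.add_ne_top, hL.ne]
  have hL0 : L + 1 ≠ 0 := by simp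
  have hev : ∀ᶠ r in 𝓝[>] (0:ℝ),
      volume (closedBall x r) / μ (closedBall x r) < L + 1 :=
    hx.eventually_lt_const hL1
  -- lower bound on closed-ball measures
  have hlow : ∀ᶠ r in 𝓝[>] (0:ℝ),
      volume (closedBall x r) / (L + 1) ≤ μ (closedBall x r) := by
    filter_upwards [hev, self_mem_nhdsWithin] with r h hr
    have hvpos : volume (closedBall x r) ≠ 0 :=
      (measure_closedBall_pos volume x hr).ne'
    have hμ0 : μ (closedBall x r) ≠ 0 := by
      intro h0
      rw [h0, ENNReal.div_zero hvpos] at h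
      exact (not_top_lt h).elim
    rw [ENNReal.div_le_iff hL0 hLtop]
    calc volume (closedBall x r)
        = volume (closedBall x r) / μ (closedBall x r) * μ (closedBall x r) :=
          (ENNReal.div_mul_cancel hμ0 (measure_ne_top μ _)).symm
      _ ≤ (L + 1) * μ (closedBall x r) :=
          mul_le_mul_left h.le _
      _ = μ (closedBall x r) * (L + 1) := mul_comm _ _
  set V : ℝ≥0∞ := volume (ball (0 : Rd d) 1) with hV
  have hV0 : V ≠ 0 := (measure_ball_pos volume _ one_pos).ne'
  have hVtop : V ≠ ∞ := measure_ball_lt_top.ne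
  set C : ℝ := V.toReal / (L + 1).toReal with hC
  have hCpos : 0 < C :=
    div_pos (ENNReal.toReal_pos hV0 hVtop) (ENNReal.toReal_pos hL0 hLtop)
  have htend : Tendsto (fun r : ℝ => r / 2) (𝓝[>] (0:ℝ)) (𝓝[>] (0:ℝ)) := by
    apply tendsto_nhdsWithin_of_tendsto_nhds_of_eventually_within
    · have : Tendsto (fun r : ℝ => r / 2) (𝓝 (0:ℝ)) (𝓝 (0/2 : ℝ)) :=
        (tendsto_id.div_const 2)
      simpa using this.mono_left nhdsWithin_le_nhds
    · filter_upwards [self_mem_nhdsWithin] with r hr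
      exact half_pos (Set.mem_Ioi.mp hr)
  have hlow2 : ∀ᶠ r in 𝓝[>] (0:ℝ),
      volume (closedBall x (r/2)) / (L + 1) ≤ μ (closedBall x (r/2)) :=
    htend.eventually hlow
  have hball : ∀ᶠ r in 𝓝[>] (0:ℝ),
      C * (r / 2) ^ d ≤ (μ (ball x r)).toReal := by
    filter_upwards [hlow2, self_mem_nhdsWithin] with r h hr
    have hr2 : (0:ℝ) ≤ r / 2 := (half_pos hr).le
    have hvol : volume (closedBall x (r/2))
        = ENNReal.ofReal ((r/2) ^ d) * V := by
      rw [Measure.addHaar_closedBall volume x hr2, finrank_euclideanSpace_fin]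
    have hsub : μ (closedBall x (r/2)) ≤ μ (ball x r) :=
      measure_mono (fun y hy => mem_ball.mpr (lt_of_le_of_lt (mem_closedBall.mp hy) (half_lt_self hr)))
    have h2 : ENNReal.ofReal ((r/2) ^ d) * V / (L + 1) ≤ μ (ball x r) := by
      rw [← hvol]; exact h.trans hsub
    have := ENNReal.toReal_mono (measure_ne_top μ _) h2
    rw [ENNReal.toReal_div, ENNReal.toReal_mul, ENNReal.toReal_ofReal (by positivity)] at this
    calc C * (r/2)^d = (r/2)^d * V.toReal / (L+1).toReal := by rw [hC]; ring
      _ ≤ (μ (ball x r)).toReal := this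
  -- translate to a bound on the log-ratio
  set K : ℝ := Real.log C - (d:ℝ) * Real.log 2 with hK
  have hfg : ∀ᶠ r in 𝓝[>] (0:ℝ),
      (((Real.log (μ (ball x r)).toReal / Real.log r : ℝ)) : EReal)
        ≤ (((d:ℝ) + K / Real.log r : ℝ) : EReal) := by
    filter_upwards [hball, Ioo_mem_nhdsGT_of_mem (by norm_num : (0:ℝ) ∈ Ico (0:ℝ) 1)]
      with r h hr
    rw [EReal.coe_le_coe_iff]
    have hr0 : 0 < r := hr.1
    have hr1 : r < 1 := hr.2
    have hlogr : Real.log r < 0 := Real.log_neg hr0 hr1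
    have hpos : 0 < C * (r/2)^d := by positivity
    have hlog : Real.log (C * (r/2)^d) ≤ Real.log (μ (ball x r)).toReal :=
      Real.log_le_log hpos h
    have hexp : Real.log (C * (r/2)^d)
        = (d:ℝ) * Real.log r + K := by
      rw [Real.log_mul hCpos.ne' (by positivity), Real.log_pow,
        Real.log_div hr0.ne' (by norm_num), hK]
      ring
    have hnum : (d:ℝ) * Real.log r + K ≤ Real.log (μ (ball x r)).toReal := by
      rw [← hexp]; exact hlog
    calc Real.log (μ (ball x r)).toReal / Real.log r
        ≤ ((d:ℝ) * Real.log r + K) / Real.log r :=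
          div_le_div_of_nonpos_of_le hlogr.le hnum
      _ = (d:ℝ) + K / Real.log r := by
          rw [add_div, mul_div_cancel_right₀ _ hlogr.ne]
  -- conclude via liminf comparison
  have hgl : Tendsto (fun r : ℝ => (((d:ℝ) + K / Real.log r : ℝ) : EReal))
      (𝓝[>] (0:ℝ)) (𝓝 (((d:ℝ)) : EReal)) := by
    rw [EReal.tendsto_coe]
    have : Tendsto (fun r : ℝ => K / Real.log r) (𝓝[>] (0:ℝ)) (𝓝 0) := by
      have h1 : Tendsto (fun r : ℝ => -Real.log r) (𝓝[>] (0:ℝ)) atTop :=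
        tendsto_neg_atBot_atTop.comp Real.tendsto_log_nhdsGT_zero
      have h2 := (h1.inv_tendsto_atTop).const_mul (-K)
      rw [mul_zero] at h2
      have heq : (fun r : ℝ => K / Real.log r)
          = fun r : ℝ => -K * (-Real.log r)⁻¹ := by
        funext r; rw [inv_neg, div_eq_mul_inv]; ring
      rw [heq]; exact h2
    simpa using tendsto_const_nhds.add this
  calc locDim μ x ≤ Filter.liminf
        (fun r : ℝ => (((d:ℝ) + K / Real.log r : ℝ) : EReal)) (𝓝[>] (0:ℝ)) :=
        Filter.liminf_le_liminf hfg
    _ = (((d:ℝ)) : EReal) := hgl.liminf_eq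

/-- If the support of a probability measure `μ` on `ℝ^d` contains an open cube
`U` and `x ↦ h_μ(x)` is continuous on `U`, then `h_μ ≡ d` on `U`. -/
theorem locDim_eq_dim_of_continuousOn (d : ℕ) (μ : Measure (Rd d)) [IsProbabilityMeasure μ]
    (a : Rd d) (r : ℝ) (hr : 0 < r) (U : Set (Rd d))
    (hU : U = {x : Rd d | ∀ i, x i ∈ Set.Ioo (a i) (a i + r)})
    (hsupp : U ⊆ msupp μ)
    (hcont : ContinuousOn (locDim μ) U) :
    ∀ x ∈ U, locDim μ x = ((d : ℝ) : EReal) := by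
  have hUopen : IsOpen U := by
    rw [hU, Set.setOf_forall]
    exact isOpen_iInter_of_finite fun i =>
      (isOpen_Ioo).preimage (EuclideanSpace.proj i).continuous
  intro x₀ hx₀
  rcases Nat.eq_zero_or_pos d with hd0 | hdpos
  · subst hd0
    have hball : ∀ (x : Rd 0) (ρ : ℝ), 0 < ρ → ball x ρ = univ := by
      intro x ρ hρ
      refine eq_univ_of_forall fun y => ?_
      have hyx : y = x := PiLp.ext fun i => Fin.elim0 i
      rw [hyx]; exact mem_ball_self hρ
    have hcongr : (fun ρ : ℝ =>
        ((Real.log (μ (ball x₀ ρ)).toReal / Real.log ρ : ℝ) : EReal))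
        =ᶠ[𝓝[>] (0:ℝ)] fun _ => ((0:ℝ) : EReal) := by
      filter_upwards [self_mem_nhdsWithin] with ρ hρ
      rw [hball x₀ ρ hρ, measure_univ]
      norm_num
    rw [locDim, liminf_congr hcongr, liminf_const]
    norm_num
  -- d ≥ 1
  have hUnhds : U ∈ 𝓝 x₀ := hUopen.mem_nhds hx₀
  have hnw : 𝓝[U] x₀ = 𝓝 x₀ := nhdsWithin_eq_nhds.mpr hUnhds
  have hcwa : Tendsto (locDim μ) (𝓝 x₀) (𝓝 (locDim μ x₀)) := by
    have := hcont x₀ hx₀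
    rwa [ContinuousWithinAt, hnw] at this
  rcases lt_trichotomy (locDim μ x₀) (((d:ℝ)) : EReal) with hlt | heq | hgt
  · -- impossible: dimension drop on an open set
    exfalso
    obtain ⟨s, hs1, hs2⟩ := EReal.exists_between_coe_real hlt
    have hsd : s < (d : ℝ) := by exact_mod_cast hs2
    have hev : ∀ᶠ y in 𝓝 x₀, locDim μ y < (s : EReal) :=
      hcwa.eventually_lt_const hs1
    obtain ⟨ρ, hρpos, hρsub⟩ :=
      Metric.eventually_nhds_iff_ball.mp (hev.and (hUopen.eventually_mem hx₀))
    -- Frostman bound on the ball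
    have hfro : dimH (ball x₀ ρ) ≤ ENNReal.ofReal s := by
      refine dimH_le_of_frequently_mass_lower_bound μ s _ fun x hx => ?_
      obtain ⟨hxs, hxU⟩ := hρsub x hx
      rw [locDim] at hxs
      have hfreq : ∃ᶠ ρ' in 𝓝[>] (0:ℝ),
          ((Real.log (μ (ball x ρ')).toReal / Real.log ρ' : ℝ) : EReal) < (s : EReal) :=
        frequently_lt_of_liminf_lt (by isBoundedDefault) hxs
      refine (hfreq.and_eventually
        (Ioo_mem_nhdsGT_of_mem (by norm_num : (0:ℝ) ∈ Ico (0:ℝ) 1))).mono ?_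
      rintro ρ' ⟨h1, h2⟩
      have hρ'0 : 0 < ρ' := h2.1
      have hρ'1 : ρ' < 1 := h2.2
      have hμpos : 0 < μ (ball x ρ') := hsupp hxU ρ' hρ'0
      have hμtop : μ (ball x ρ') ≠ ∞ := measure_ne_top μ _
      have htR : 0 < (μ (ball x ρ')).toReal := ENNReal.toReal_pos hμpos.ne' hμtop
      have hlogr : Real.log ρ' < 0 := Real.log_neg hρ'0 hρ'1
      have hlt : Real.log (μ (ball x ρ')).toReal / Real.log ρ' < s :=
        EReal.coe_lt_coe_iff.mp h1
      have hmul : s * Real.log ρ' < Real.log (μ (ball x ρ')).toReal :=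
        (div_lt_iff_of_neg hlogr).mp hlt
      have hlog : Real.log (ρ' ^ s) < Real.log (μ (ball x ρ')).toReal := by
        rw [Real.log_rpow hρ'0]; exact hmul
      have hrs : ρ' ^ s < (μ (ball x ρ')).toReal := by
        have := (Real.log_lt_log_iff (Real.rpow_pos_of_pos hρ'0 s) htR).mp hlog
        exact this
      calc ENNReal.ofReal (ρ' ^ s) ≤ ENNReal.ofReal (μ (ball x ρ')).toReal :=
            ENNReal.ofReal_le_ofReal hrs.le
        _ = μ (ball x ρ') := ENNReal.ofReal_toReal hμtop
    have hdim : dimH (ball x₀ ρ) = (d : ℝ≥0∞) := by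
      rw [Real.dimH_of_mem_nhds (ball_mem_nhds x₀ hρpos)]
      rw [finrank_euclideanSpace_fin]
    rw [hdim] at hfro
    have : ENNReal.ofReal s < (d : ℝ≥0∞) := by
      rw [← ENNReal.ofReal_natCast d]
      exact (ENNReal.ofReal_lt_ofReal_iff (by exact_mod_cast hdpos)).mpr hsd
    exact absurd hfro (not_le.mpr this)
  · exact heq
  · -- impossible: would contradict the a.e. upper bound
    exfalso
    have hev : ∀ᶠ y in 𝓝 x₀, ((d:ℝ) : EReal) < locDim μ y :=
      hcwa.eventually_const_lt hgt
    obtain ⟨ρ, hρpos, hρsub⟩ :=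
      Metric.eventually_nhds_iff_ball.mp (hev.and (hUopen.eventually_mem hx₀))
    have hae := ae_locDim_le d μ
    rw [ae_iff] at hae
    have hmono : μ (ball x₀ ρ) ≤ μ {y | ¬ locDim μ y ≤ ((d:ℝ) : EReal)} := by
      refine measure_mono fun y hy => ?_
      exact not_le.mpr (hρsub y hy).1
    rw [hae] at hmono
    have hpos : 0 < μ (ball x₀ ρ) := hsupp hx₀ ρ hρpos
    exact absurd (le_antisymm hmono zero_le) hpos.ne'
end
end

section
/- For every Borel probability measure μ on ℝ^d and every H ≥ 0, the Hausdorff dimension of the level set E_μ(H) = {x ∈ Supp(μ) : h_μ(x) = H} satisfies dim_H E_μ(H) ≤ min(H, d) (with the convention dim ∅ = -∞). -/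
open MeasureTheory Filter Set Metric Topology ENNReal

noncomputable section
open scoped Classical

open scoped NNReal

lemma ediam_closedBall_le {X : Type*} [MetricSpace X] (x : X) {r : ℝ} (hr : 0 ≤ r) :
    EMetric.diam (closedBall x r) ≤ ENNReal.ofReal (2 * r) := by
  rw [← Metric.emetric_closedBall hr, ENNReal.ofReal_mul (by norm_num), ENNReal.ofReal_ofNat]
  exact EMetric.diam_closedBall

lemma billingsley {X : Type*} [MetricSpace X] [MeasurableSpace X] [BorelSpace X]
    (μ : Measure X) [IsProbabilityMeasure μ] (E : Set X) (s : ℝ≥0)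
    (h : ∀ x ∈ E, ∀ δ : ℝ, 0 < δ → ∃ r : ℝ, 0 < r ∧ r < δ ∧
      ENNReal.ofReal (r ^ (s : ℝ)) ≤ μ (ball x r)) :
    dimH E ≤ s := by
  apply dimH_le_of_hausdorffMeasure_ne_top (d := s)
  -- For each n, build a countable covering at scale 1/(n+1)
  have key : ∀ n : ℕ, ∃ u : Set (X × ℝ), u.Countable ∧
      (∀ p ∈ u, 0 < p.2 ∧ p.2 < 1 / (n + 1) ∧ ENNReal.ofReal (p.2 ^ (s : ℝ)) ≤ μ (ball p.1 p.2)) ∧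
      (u.PairwiseDisjoint fun p => closedBall p.1 p.2) ∧
      E ⊆ ⋃ p ∈ u, closedBall p.1 (4 * p.2) := by
    intro n
    set t : Set (X × ℝ) := {p | p.1 ∈ E ∧ 0 < p.2 ∧ p.2 < 1 / (n + 1) ∧
      ENNReal.ofReal (p.2 ^ (s : ℝ)) ≤ μ (ball p.1 p.2)} with ht
    obtain ⟨u, hut, hdisj, hcov⟩ :=
      Vitali.exists_disjoint_subfamily_covering_enlargement_closedBall t Prod.fst Prod.snd
        (1 / (n + 1)) (fun p hp => hp.2.2.1.le) 4 (by norm_num)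
    refine ⟨u, ?_, fun p hp => (hut hp).2, hdisj, ?_⟩
    · -- countability: disjoint positive-measure sets
      have : {i : u | 0 < μ (closedBall i.1.1 i.1.2)} = univ := by
        ext i
        simp only [mem_setOf_eq, mem_univ, iff_true]
        have h1 := (hut i.2).2
        calc (0 : ℝ≥0∞) < ENNReal.ofReal (i.1.2 ^ (s : ℝ)) := by
              simp [ENNReal.ofReal_pos, Real.rpow_pos_of_pos h1.1]
          _ ≤ μ (ball i.1.1 i.1.2) := h1.2.2
          _ ≤ μ (closedBall i.1.1 i.1.2) := measure_mono ball_subset_closedBall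
      have hc : (univ : Set u).Countable := by
        rw [← this]
        exact Measure.countable_meas_pos_of_disjoint_iUnion (μ := μ)
          (As := fun i : u => closedBall i.1.1 i.1.2)
          (fun i => measurableSet_closedBall)
          (fun (i j : u) hij => hdisj i.property j.property (fun hh => hij (Subtype.ext hh)))
      exact (countable_univ_iff.mp hc)
    · intro x hx
      obtain ⟨r, hr0, hrδ, hrμ⟩ := h x hx (1 / (n + 1)) (by positivity)
      have hxt : (x, r) ∈ t := ⟨hx, hr0, hrδ, hrμ⟩
      obtain ⟨b, hbu, hsub⟩ := hcov _ hxt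
      exact mem_biUnion hbu (hsub (mem_closedBall_self hr0.le))
  choose u hu_count hu_mem hu_disj hu_cov using key
  haveI : ∀ n, Countable (u n) := fun n => (hu_count n).to_subtype
  have hH := Measure.hausdorffMeasure_le_liminf_tsum (s : ℝ) E
    (l := atTop) (r := fun n : ℕ => ENNReal.ofReal (8 * (1 / (n + 1))))
    (t := fun n (i : u n) => closedBall i.1.1 (4 * i.1.2)) ?_ ?_ ?_
  · refine ne_top_of_le_ne_top (by finiteness :
        ENNReal.ofReal ((8 : ℝ) ^ (s : ℝ)) ≠ ∞) (hH.trans ?_)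
    have hbound : ∀ n : ℕ, (∑' i : u n, EMetric.diam (closedBall i.1.1 (4 * i.1.2)) ^ (s : ℝ))
        ≤ ENNReal.ofReal ((8 : ℝ) ^ (s : ℝ)) := by
      intro n
      have step : ∀ i : u n, EMetric.diam (closedBall i.1.1 (4 * i.1.2)) ^ (s : ℝ)
          ≤ ENNReal.ofReal ((8 : ℝ) ^ (s : ℝ)) * μ (closedBall i.1.1 i.1.2) := by
        intro i
        have hi := hu_mem n i.1 i.2
        have hdiam : EMetric.diam (closedBall i.1.1 (4 * i.1.2)) ≤ ENNReal.ofReal (8 * i.1.2) := by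
          have h8 : (8 : ℝ) * i.1.2 = 2 * (4 * i.1.2) := by ring
          rw [h8]
          exact ediam_closedBall_le _ (by nlinarith [hi.1])
        calc EMetric.diam (closedBall i.1.1 (4 * i.1.2)) ^ (s : ℝ)
            ≤ ENNReal.ofReal (8 * i.1.2) ^ (s : ℝ) :=
              ENNReal.rpow_le_rpow hdiam s.2
          _ = ENNReal.ofReal ((8 * i.1.2) ^ (s : ℝ)) :=
              ENNReal.ofReal_rpow_of_nonneg (by nlinarith [hi.1]) s.2
          _ = ENNReal.ofReal ((8 : ℝ) ^ (s : ℝ) * i.1.2 ^ (s : ℝ)) := by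
              rw [Real.mul_rpow (by norm_num) hi.1.le]
          _ = ENNReal.ofReal ((8 : ℝ) ^ (s : ℝ)) * ENNReal.ofReal (i.1.2 ^ (s : ℝ)) :=
              ENNReal.ofReal_mul (by positivity)
          _ ≤ ENNReal.ofReal ((8 : ℝ) ^ (s : ℝ)) * μ (ball i.1.1 i.1.2) := by
              gcongr; exact hi.2.2
          _ ≤ ENNReal.ofReal ((8 : ℝ) ^ (s : ℝ)) * μ (closedBall i.1.1 i.1.2) := by
              gcongr; exact ball_subset_closedBall
      calc (∑' i : u n, EMetric.diam (closedBall i.1.1 (4 * i.1.2)) ^ (s : ℝ))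
          ≤ ∑' i : u n, ENNReal.ofReal ((8 : ℝ) ^ (s : ℝ)) * μ (closedBall i.1.1 i.1.2) :=
            ENNReal.tsum_le_tsum step
        _ = ENNReal.ofReal ((8 : ℝ) ^ (s : ℝ)) * ∑' i : u n, μ (closedBall i.1.1 i.1.2) :=
            ENNReal.tsum_mul_left
        _ = ENNReal.ofReal ((8 : ℝ) ^ (s : ℝ)) * μ (⋃ i : u n, closedBall i.1.1 i.1.2) := by
            rw [measure_iUnion
              (fun (i j : u n) hij => hu_disj n i.property j.property (fun hh => hij (Subtype.ext hh)))
              (fun i => measurableSet_closedBall)]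
        _ ≤ ENNReal.ofReal ((8 : ℝ) ^ (s : ℝ)) * 1 := by gcongr; exact prob_le_one
        _ = ENNReal.ofReal ((8 : ℝ) ^ (s : ℝ)) := mul_one _
    calc liminf (fun n : ℕ => ∑' i : u n, EMetric.diam (closedBall i.1.1 (4 * i.1.2)) ^ (s : ℝ)) atTop
        ≤ liminf (fun _ : ℕ => ENNReal.ofReal ((8 : ℝ) ^ (s : ℝ))) atTop :=
          liminf_le_liminf (Eventually.of_forall hbound)
      _ = ENNReal.ofReal ((8 : ℝ) ^ (s : ℝ)) := liminf_const _
  · -- tendsto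
    have hreal : Tendsto (fun n : ℕ => 8 * (1 / ((n : ℝ) + 1))) atTop (𝓝 (8 * 0)) :=
      tendsto_one_div_add_atTop_nhds_zero_nat.const_mul 8
    rw [mul_zero] at hreal
    simpa using ENNReal.tendsto_ofReal hreal
  · -- diam bound
    apply Eventually.of_forall
    intro n i
    have hi := hu_mem n i.1 i.2
    calc EMetric.diam (closedBall i.1.1 (4 * i.1.2))
        ≤ ENNReal.ofReal (2 * (4 * i.1.2)) := ediam_closedBall_le _ (by nlinarith [hi.1])
      _ ≤ ENNReal.ofReal (8 * (1 / (n + 1))) := by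
          apply ENNReal.ofReal_le_ofReal; nlinarith [hi.1, hi.2.1]
  · -- covering
    apply Eventually.of_forall
    intro n x hx
    obtain ⟨p, hp, hxp⟩ := mem_iUnion₂.mp (hu_cov n hx)
    exact mem_iUnion.mpr ⟨⟨p, hp⟩, hxp⟩

/-- For every Borel probability measure `μ` on `ℝ^d` and `H ≥ 0`,
`dim_H E_μ(H) ≤ min (H, d)`, with the convention `dim ∅ = -∞`. -/
theorem specM_le_min (d : ℕ) (μ : Measure (Rd d)) [IsProbabilityMeasure μ]
    (H : ℝ) (hH : 0 ≤ H) :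
    specM μ H ≤ min ((H : ℝ) : EReal) (((d : ℝ) : ℝ) : EReal) := by
  set E := {x | x ∈ msupp μ ∧ locDim μ x = (H : EReal)} with hE
  rw [specM]
  split_ifs with hne
  · exact bot_le
  rw [le_min_iff]
  constructor
  · -- ≤ H
    have key : ∀ s : ℝ≥0, H < (s : ℝ) → dimH E ≤ (s : ℝ≥0∞) := by
      intro s hs
      apply billingsley μ E s
      intro x hx δ hδ
      have hfreq : ∃ᶠ r in 𝓝[>] (0 : ℝ),
          Real.log (μ (ball x r)).toReal / Real.log r < (s : ℝ) := by
        have hlt : locDim μ x < (((s : ℝ) : ℝ) : EReal) := by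
          rw [hx.2]; exact_mod_cast hs
        simp only [locDim] at hlt
        have hfr := frequently_lt_of_liminf_lt (u := fun r : ℝ =>
          ((Real.log (μ (ball x r)).toReal / Real.log r : ℝ) : EReal)) (f := 𝓝[>] (0:ℝ))
          (h := hlt)
        exact hfr.mono fun r hr => by simpa using EReal.coe_lt_coe_iff.mp hr
      have hev : ∀ᶠ r in 𝓝[>] (0 : ℝ), r < min δ 1 ∧ 0 < r := by
        filter_upwards [Ioo_mem_nhdsGT_of_mem ⟨le_refl (0:ℝ), lt_min hδ one_pos⟩] with r hr
        exact ⟨hr.2, hr.1⟩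
      obtain ⟨r, hrs, hrδ1, hr0⟩ := (hfreq.and_eventually hev).exists
      have hrδ : r < δ := hrδ1.trans_le (min_le_left _ _)
      have hr1 : r < 1 := hrδ1.trans_le (min_le_right _ _)
      refine ⟨r, hr0, hrδ, ?_⟩
      have hμpos : 0 < μ (ball x r) := hx.1 r hr0
      have hμne : μ (ball x r) ≠ ∞ := measure_ne_top μ _
      have hm : 0 < (μ (ball x r)).toReal := ENNReal.toReal_pos hμpos.ne' hμne
      have hlogr : Real.log r < 0 := Real.log_neg hr0 hr1
      have hmul : (s : ℝ) * Real.log r < Real.log (μ (ball x r)).toReal :=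
        (div_lt_iff_of_neg hlogr).mp hrs
      have hrpow : r ^ (s : ℝ) < (μ (ball x r)).toReal := by
        rw [Real.rpow_def_of_pos hr0, mul_comm]
        calc Real.exp ((s : ℝ) * Real.log r)
            < Real.exp (Real.log (μ (ball x r)).toReal) := Real.exp_lt_exp.mpr hmul
          _ = (μ (ball x r)).toReal := Real.exp_log hm
      calc ENNReal.ofReal (r ^ (s : ℝ)) ≤ ENNReal.ofReal (μ (ball x r)).toReal :=
            ENNReal.ofReal_le_ofReal hrpow.le
        _ = μ (ball x r) := ENNReal.ofReal_toReal hμne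
    have hdim : dimH E ≤ ENNReal.ofReal H := by
      by_contra hcon
      push_neg at hcon
      obtain ⟨s, hs1, hs2⟩ := ENNReal.lt_iff_exists_nnreal_btwn.mp hcon
      have hHs : H < (s : ℝ) := by
        rw [← ENNReal.ofReal_coe_nnreal, ENNReal.ofReal_lt_ofReal_iff_of_nonneg hH] at hs1
        exact hs1
      exact absurd (key s hHs) (not_le.mpr hs2)
    calc (dimH E : EReal) ≤ (ENNReal.ofReal H : EReal) :=
          EReal.coe_ennreal_le_coe_ennreal_iff.mpr hdim
      _ = (H : EReal) := by rw [EReal.coe_ennreal_ofReal, max_eq_left hH]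
  · -- ≤ d
    have hdim : dimH E ≤ (d : ℝ≥0∞) := by
      calc dimH E ≤ dimH (univ : Set (Rd d)) := dimH_mono (subset_univ _)
        _ = Module.finrank ℝ (Rd d) := Real.dimH_univ_eq_finrank _
        _ = d := by rw [finrank_euclideanSpace_fin]
    calc (dimH E : EReal) ≤ ((d : ℝ≥0∞) : EReal) :=
          EReal.coe_ennreal_le_coe_ennreal_iff.mpr hdim
      _ = (((d : ℝ) : ℝ) : EReal) := by
          rw [← ENNReal.ofReal_natCast, EReal.coe_ennreal_ofReal,
            max_eq_left (by positivity)]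
end
end

section
/- Let μ be a Borel probability measure on [0,1]^d and let F_μ be the function whose wavelet coefficients are d_λ = μ(λ). Then the wavelet-leader L^q-scaling function of F_μ equals the L^q-spectrum of μ: L_{F_μ}(q) = τ_μ(q) for every q ∈ ℝ. -/
open MeasureTheory Filter Set Metric Topology ENNReal

noncomputable section
open scoped Classical

/-- The closed dyadic cube `2^{-j} k + [0, 2^{-j}]^d` of generation `j`. -/
def dyadicCube {d : ℕ} (j : ℕ) (k : Fin d → ℤ) : Set (Rd d) :=
  {x | ∀ i, (k i : ℝ) * 2 ^ (-(j : ℝ)) ≤ x i ∧ x i ≤ ((k i : ℝ) + 1) * 2 ^ (-(j : ℝ))}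

/-- The unit cube `[0,1]^d`. -/
def unitCube (d : ℕ) : Set (Rd d) := {x | ∀ i, x i ∈ Set.Icc (0 : ℝ) 1}

/-- Extended logarithm on `ℝ≥0∞`. -/
def elog (x : ℝ≥0∞) : EReal :=
  if x = 0 then ⊥ else if x = ⊤ then ⊤ else ((Real.log x.toReal : ℝ) : EReal)

/-- `∑_{λ ∈ 𝒟_j, μ(λ) ≠ 0} μ(λ)^q`. -/
def tauSum {d : ℕ} (μ : Measure (Rd d)) (q : ℝ) (j : ℕ) : ℝ≥0∞ :=
  ∑' k : Fin d → ℤ, if μ (dyadicCube j k) = 0 then 0 else μ (dyadicCube j k) ^ q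

/-- The `L^q`-spectrum `τ_μ(q) = liminf_{j→∞} (-1/j) log₂ ∑_{λ∈𝒟_j, μ(λ)≠0} μ(λ)^q`. -/
def tauMu {d : ℕ} (μ : Measure (Rd d)) (q : ℝ) : EReal :=
  Filter.liminf
    (fun j : ℕ =>
      (((-1 : ℝ) / (j : ℝ) : ℝ) : EReal) *
        (elog (tauSum μ q j) / ((Real.log 2 : ℝ) : EReal)))
    atTop

/-- The cube `3λ`, with the same center as the dyadic cube `λ` of generation `j`
and three times its side length. -/
def cube3 {d : ℕ} (j : ℕ) (k : Fin d → ℤ) : Set (Rd d) :=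
  {x | ∀ i, ((k i : ℝ) - 1) * 2 ^ (-(j : ℝ)) ≤ x i ∧ x i ≤ ((k i : ℝ) + 2) * 2 ^ (-(j : ℝ))}

/-- The wavelet leader of `F_μ` at the dyadic cube `λ = (j,k)`, when the wavelet coefficients
are `d_λ = μ(λ)`: `d^L_λ = sup {μ(λ') : λ' ⊆ 3λ}`. -/
def mleader {d : ℕ} (μ : Measure (Rd d)) (j : ℕ) (k : Fin d → ℤ) : ℝ≥0∞ :=
  ⨆ (j' : ℕ) (k' : Fin d → ℤ) (_ : dyadicCube j' k' ⊆ cube3 j k), μ (dyadicCube j' k')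

/-- `∑_{λ ∈ 𝒟_j, d^L_λ ≠ 0} (d^L_λ)^q`. -/
def leaderSum {d : ℕ} (μ : Measure (Rd d)) (q : ℝ) (j : ℕ) : ℝ≥0∞ :=
  ∑' k : Fin d → ℤ, if mleader μ j k = 0 then 0 else mleader μ j k ^ q

/-- The wavelet-leader `L^q`-scaling function
`L_{F_μ}(q) = liminf_j (-1/j) log₂ ∑_{λ∈𝒟_j, d^L_λ≠0} (d^L_λ)^q`. -/
def leaderScaling {d : ℕ} (μ : Measure (Rd d)) (q : ℝ) : EReal :=
  Filter.liminf
    (fun j : ℕ =>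
      (((-1 : ℝ) / (j : ℝ) : ℝ) : EReal) *
        (elog (leaderSum μ q j) / ((Real.log 2 : ℝ) : EReal)))
    atTop


namespace LT1
variable {d : ℕ}

lemma hpow_pos (j : ℕ) : (0:ℝ) < 2 ^ (-(j:ℝ)) := Real.rpow_pos_of_pos two_pos _

lemma hpow_succ (j : ℕ) : (2:ℝ) ^ (-(j:ℝ)) = 2 * 2 ^ (-((j+1:ℕ):ℝ)) := by
  rw [show (-((j+1:ℕ):ℝ)) = (-(j:ℝ)) + (-1) by push_cast; ring, Real.rpow_add two_pos,
    Real.rpow_neg_one]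
  ring

lemma hpow_two (j : ℕ) : (2:ℝ) ^ (-(j:ℝ)) = 4 * 2 ^ (-((j+2:ℕ):ℝ)) := by
  have h1 := hpow_succ j
  have h2 := hpow_succ (j+1)
  rw [show ((j:ℕ)+2) = (j+1)+1 by ring]
  linarith

lemma pow_mul_hpow (j : ℕ) : (2:ℝ)^(j:ℕ) * 2^(-(j:ℝ)) = 1 := by
  rw [← Real.rpow_natCast 2 j, ← Real.rpow_add two_pos]
  simp

/-- neighbor dyadic cubes are inside `3λ`. -/
lemma dyadic_subset_cube3 {j : ℕ} {k e : Fin d → ℤ} (he : ∀ i, -1 ≤ e i ∧ e i ≤ 1) :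
    dyadicCube j (fun i => k i + e i) ⊆ cube3 j k := by
  intro x hx i
  obtain ⟨h1, h2⟩ := hx i
  have hp := hpow_pos j
  have he1 : (-1:ℝ) ≤ (e i : ℝ) := by exact_mod_cast (he i).1
  have he2 : ((e i:ℝ)) ≤ 1 := by exact_mod_cast (he i).2
  have hc1 : ((k i : ℝ) - 1) * 2 ^ (-(j:ℝ)) ≤ ((k i + e i : ℤ) : ℝ) * 2 ^ (-(j:ℝ)) := by
    apply mul_le_mul_of_nonneg_right _ hp.le
    push_cast; linarith
  have hc2 : (((k i + e i : ℤ) : ℝ) + 1) * 2 ^ (-(j:ℝ)) ≤ ((k i : ℝ) + 2) * 2 ^ (-(j:ℝ)) := by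
    apply mul_le_mul_of_nonneg_right _ hp.le
    push_cast; linarith
  constructor
  · exact hc1.trans h1
  · exact h2.trans hc2

lemma self_subset_cube3 {j : ℕ} (k : Fin d → ℤ) : dyadicCube j k ⊆ cube3 j k := by
  have := dyadic_subset_cube3 (j := j) (k := k) (e := fun _ => 0) (fun i => by simp)
  simpa using this

/-- `3λ` is covered by the `3^d` neighbors. -/
lemma cube3_subset_biUnion (j : ℕ) (k : Fin d → ℤ) :
    cube3 j k ⊆ ⋃ e ∈ Fintype.piFinset (fun _ : Fin d => Finset.Icc (-1 : ℤ) 1),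
      dyadicCube j (fun i => k i + e i) := by
  intro x hx
  have hp := hpow_pos j
  set e : Fin d → ℤ := fun i =>
    if x i ≤ (k i : ℝ) * 2 ^ (-(j:ℝ)) then -1
    else if x i ≤ ((k i : ℝ) + 1) * 2 ^ (-(j:ℝ)) then 0 else 1 with he
  have hmem : e ∈ Fintype.piFinset (fun _ : Fin d => Finset.Icc (-1 : ℤ) 1) := by
    rw [Fintype.mem_piFinset]
    intro i
    rw [Finset.mem_Icc]
    by_cases h1 : x i ≤ (k i : ℝ) * 2 ^ (-(j:ℝ)) <;>
      by_cases h2 : x i ≤ ((k i : ℝ) + 1) * 2 ^ (-(j:ℝ)) <;>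
      (simp only [he]; split_ifs <;> norm_num)
  refine Set.mem_biUnion hmem ?_
  · intro i
    obtain ⟨hx1, hx2⟩ := hx i
    by_cases h1 : x i ≤ (k i : ℝ) * 2 ^ (-(j:ℝ))
    · have : e i = -1 := by simp only [he]; rw [if_pos h1]
      simp only [this]
      push_cast
      constructor <;> nlinarith
    · by_cases h2 : x i ≤ ((k i : ℝ) + 1) * 2 ^ (-(j:ℝ))
      · have : e i = 0 := by simp only [he]; rw [if_neg h1, if_pos h2]
        simp only [this]
        push_cast
        constructor <;> nlinarith
      · have : e i = 1 := by simp only [he]; rw [if_neg h1, if_neg h2]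
        simp only [this]
        push_cast
        constructor <;> nlinarith

/-- a dyadic cube is covered by its `2^d` children. -/
lemma dyadic_subset_children (j : ℕ) (k : Fin d → ℤ) :
    dyadicCube j k ⊆ ⋃ e ∈ Fintype.piFinset (fun _ : Fin d => Finset.Icc (0 : ℤ) 1),
      dyadicCube (j+1) (fun i => 2 * k i + e i) := by
  intro x hx
  have hp := hpow_pos (j+1)
  have hs := hpow_succ j
  set e : Fin d → ℤ := fun i =>
    if x i ≤ ((2 * k i : ℤ) : ℝ) * 2 ^ (-((j+1:ℕ):ℝ)) + 2 ^ (-((j+1:ℕ):ℝ)) then 0 else 1 with he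
  have hmem : e ∈ Fintype.piFinset (fun _ : Fin d => Finset.Icc (0 : ℤ) 1) := by
    rw [Fintype.mem_piFinset]
    intro i
    rw [Finset.mem_Icc]
    simp only [he]
    split_ifs <;> norm_num
  refine Set.mem_biUnion hmem ?_
  intro i
  obtain ⟨hx1, hx2⟩ := hx i
  rw [hs] at hx1 hx2
  by_cases h1 : x i ≤ ((2 * k i : ℤ) : ℝ) * 2 ^ (-((j+1:ℕ):ℝ)) + 2 ^ (-((j+1:ℕ):ℝ))
  · have hei : e i = 0 := by simp only [he]; rw [if_pos h1]
    simp only [hei]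
    have hc : ((2 * k i + 0 : ℤ) : ℝ) = 2 * (k i : ℝ) := by push_cast; ring
    have hc2 : ((2 * k i : ℤ) : ℝ) = 2 * (k i : ℝ) := by push_cast; ring
    rw [hc2] at h1
    constructor
    · rw [hc]; linarith
    · rw [hc]; linarith
  · have hei : e i = 1 := by simp only [he]; rw [if_neg h1]
    simp only [hei]
    have hc : ((2 * k i + 1 : ℤ) : ℝ) = 2 * (k i : ℝ) + 1 := by push_cast; ring
    have hc2 : ((2 * k i : ℤ) : ℝ) = 2 * (k i : ℝ) := by push_cast; ring
    rw [hc2] at h1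
    push_neg at h1
    constructor
    · rw [hc]; linarith
    · rw [hc]; linarith

/-- the distinguished grandchild's `3`-cube sits inside the cube. -/
lemma cube3_grandchild_subset (j : ℕ) (k e : Fin d → ℤ) (he : ∀ i, 0 ≤ e i ∧ e i ≤ 1) :
    cube3 (j+2) (fun i => 4 * k i + 1 + e i) ⊆ dyadicCube j k := by
  intro x hx i
  obtain ⟨hx1, hx2⟩ := hx i
  have hp := hpow_pos (j+2)
  have hs := hpow_two j
  have he1 : (0:ℝ) ≤ (e i : ℝ) := by exact_mod_cast (he i).1
  have he2 : ((e i:ℝ)) ≤ 1 := by exact_mod_cast (he i).2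
  have hc : ((4 * k i + 1 + e i : ℤ) : ℝ) = 4 * (k i : ℝ) + 1 + (e i : ℝ) := by push_cast; ring
  rw [hc] at hx1 hx2
  have hm1 : (0:ℝ) ≤ (e i : ℝ) * 2 ^ (-((j+2:ℕ):ℝ)) := mul_nonneg he1 hp.le
  have hm2 : ((e i : ℝ)) * 2 ^ (-((j+2:ℕ):ℝ)) ≤ 2 ^ (-((j+2:ℕ):ℝ)) := by
    nlinarith
  rw [hs]
  constructor <;> nlinarith

/-- the chosen child is inside the grandchild's `3`-cube. -/
lemma child_subset_cube3_grandchild (j : ℕ) (k e : Fin d → ℤ) (he : ∀ i, 0 ≤ e i ∧ e i ≤ 1) :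
    dyadicCube (j+1) (fun i => 2 * k i + e i) ⊆ cube3 (j+2) (fun i => 4 * k i + 1 + e i) := by
  intro x hx i
  obtain ⟨hx1, hx2⟩ := hx i
  have hp := hpow_pos (j+2)
  have hs : (2:ℝ) ^ (-((j+1:ℕ):ℝ)) = 2 * 2 ^ (-((j+2:ℕ):ℝ)) := by
    have := hpow_succ (j+1)
    rw [show ((j:ℕ)+1+1) = (j+2) by ring] at this
    exact this
  have he1 : (0:ℝ) ≤ (e i : ℝ) := by exact_mod_cast (he i).1
  have he2 : ((e i:ℝ)) ≤ 1 := by exact_mod_cast (he i).2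
  have hc : ((2 * k i + e i : ℤ) : ℝ) = 2 * (k i : ℝ) + (e i : ℝ) := by push_cast; ring
  have hc2 : ((4 * k i + 1 + e i : ℤ) : ℝ) = 4 * (k i : ℝ) + 1 + (e i : ℝ) := by push_cast; ring
  rw [hc, hs] at hx1 hx2
  have hm1 : (0:ℝ) ≤ (e i : ℝ) * 2 ^ (-((j+2:ℕ):ℝ)) := mul_nonneg he1 hp.le
  have hm2 : ((e i : ℝ)) * 2 ^ (-((j+2:ℕ):ℝ)) ≤ 2 ^ (-((j+2:ℕ):ℝ)) := by nlinarith
  rw [hc2]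
  constructor <;> nlinarith

/-- the unit cube is covered by the dyadic cubes of generation `j` with indices in `[-1, 2^j]`. -/
lemma unitCube_subset (j : ℕ) :
    unitCube d ⊆ ⋃ k ∈ Fintype.piFinset (fun _ : Fin d => Finset.Icc (-1 : ℤ) (2^j)),
      dyadicCube j k := by
  intro x hx
  have hp := hpow_pos j
  have hq := pow_mul_hpow j
  set k : Fin d → ℤ := fun i => ⌊x i * 2^(j:ℕ)⌋ with hk
  have hmem : k ∈ Fintype.piFinset (fun _ : Fin d => Finset.Icc (-1 : ℤ) (2^j)) := by
    rw [Fintype.mem_piFinset]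
    intro i
    obtain ⟨h0, h1⟩ := hx i
    rw [Finset.mem_Icc]
    constructor
    · have : (0:ℤ) ≤ k i := Int.floor_nonneg.mpr (by positivity)
      omega
    · have h2 : x i * 2^(j:ℕ) ≤ ((2^j : ℤ) : ℝ) := by
        push_cast
        nlinarith [pow_pos (two_pos (α := ℝ)) j]
      have : k i ≤ 2^j := by
        calc k i ≤ ⌊((2^j : ℤ) : ℝ)⌋ := Int.floor_le_floor h2
          _ = 2^j := Int.floor_intCast _
      exact this
  refine Set.mem_biUnion hmem ?_
  intro i
  have hf1 : ((k i : ℝ)) ≤ x i * 2^(j:ℕ) := Int.floor_le _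
  have hf2 : x i * 2^(j:ℕ) < (k i : ℝ) + 1 := Int.lt_floor_add_one _
  have key : x i * 2^(j:ℕ) * 2 ^ (-(j:ℝ)) = x i := by rw [mul_assoc, hq, mul_one]
  constructor
  · have := mul_le_mul_of_nonneg_right hf1 hp.le
    rw [key] at this
    exact this
  · have := mul_le_mul_of_nonneg_right hf2.le hp.le
    rw [key] at this
    exact this

/-- cubes away from `[-1,2^j]` indices miss the unit cube. -/
lemma dyadic_disjoint_unit {j : ℕ} {k : Fin d → ℤ}
    (hk : k ∉ Fintype.piFinset (fun _ : Fin d => Finset.Icc (-1 : ℤ) (2^j))) :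
    dyadicCube j k ⊆ (unitCube d)ᶜ := by
  rw [Fintype.mem_piFinset] at hk
  push_neg at hk
  obtain ⟨i, hi⟩ := hk
  rw [Finset.mem_Icc] at hi
  push_neg at hi
  intro x hx hxu
  obtain ⟨hx1, hx2⟩ := hx i
  obtain ⟨h0, h1⟩ := hxu i
  have hp := hpow_pos j
  have hq := pow_mul_hpow j
  by_cases h : k i ≤ -2
  · have hc : ((k i : ℝ)) + 1 ≤ -1 := by exact_mod_cast (by omega : (k i : ℤ) + 1 ≤ -1)
    have := mul_le_mul_of_nonneg_right hc hp.le
    nlinarith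
  · have hge : (2^j + 1 : ℤ) ≤ k i := by
      have := hi (by omega)
      omega
    have hc : ((2:ℝ)^(j:ℕ) + 1) ≤ (k i : ℝ) := by exact_mod_cast hge
    have := mul_le_mul_of_nonneg_right hc hp.le
    nlinarith

/-- `3`-cubes away from `[-2,2^j+1]` indices miss the unit cube. -/
lemma cube3_disjoint_unit {j : ℕ} {k : Fin d → ℤ}
    (hk : k ∉ Fintype.piFinset (fun _ : Fin d => Finset.Icc (-2 : ℤ) (2^j + 1))) :
    cube3 j k ⊆ (unitCube d)ᶜ := by
  rw [Fintype.mem_piFinset] at hk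
  push_neg at hk
  obtain ⟨i, hi⟩ := hk
  rw [Finset.mem_Icc] at hi
  push_neg at hi
  intro x hx hxu
  obtain ⟨hx1, hx2⟩ := hx i
  obtain ⟨h0, h1⟩ := hxu i
  have hp := hpow_pos j
  have hq := pow_mul_hpow j
  by_cases h : k i ≤ -3
  · have hc : ((k i : ℝ)) + 2 ≤ -1 := by exact_mod_cast (by omega : (k i : ℤ) + 2 ≤ -1)
    have := mul_le_mul_of_nonneg_right hc hp.le
    nlinarith
  · have hge : (2^j + 2 : ℤ) ≤ k i := by
      have := hi (by omega)
      omega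
    have hc : ((2:ℝ)^(j:ℕ) + 2) ≤ (k i : ℝ) := by exact_mod_cast hge
    have hc1 : ((2:ℝ)^(j:ℕ) + 1) ≤ (k i : ℝ) - 1 := by linarith
    have := mul_le_mul_of_nonneg_right hc1 hp.le
    nlinarith


section Meas
variable {d : ℕ} (μ : Measure (Rd d)) [IsProbabilityMeasure μ]

lemma mleader_le {j : ℕ} {k : Fin d → ℤ} {s : Set (Rd d)} (h : cube3 j k ⊆ s) :
    mleader μ j k ≤ μ s :=
  iSup_le fun _ => iSup_le fun _ => iSup_le fun hs => measure_mono (hs.trans h)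

lemma le_mleader {j : ℕ} {kk : Fin d → ℤ} {j' : ℕ} {k' : Fin d → ℤ}
    (h : dyadicCube j' k' ⊆ cube3 j kk) : μ (dyadicCube j' k') ≤ mleader μ j kk :=
  le_iSup_of_le j' (le_iSup_of_le k' (le_iSup_of_le h le_rfl))

lemma mleader_le_one {j : ℕ} {k : Fin d → ℤ} : mleader μ j k ≤ 1 :=
  le_trans (mleader_le μ (Set.subset_univ _)) (le_of_eq measure_univ)

lemma self_le_mleader {j : ℕ} {k : Fin d → ℤ} : μ (dyadicCube j k) ≤ mleader μ j k :=
  le_mleader μ (self_subset_cube3 k)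

/-- index set for neighbors -/
def E3 (d : ℕ) : Finset (Fin d → ℤ) := Fintype.piFinset (fun _ : Fin d => Finset.Icc (-1 : ℤ) 1)

lemma E3_card : (E3 d).card = 3 ^ d := by
  rw [E3, Fintype.card_piFinset]
  simp [Int.card_Icc]

lemma E3_nonempty : (E3 d).Nonempty := by
  refine ⟨fun _ => 0, ?_⟩
  rw [E3, Fintype.mem_piFinset]
  intro i; simp

lemma measure_cube3_le (j : ℕ) (k : Fin d → ℤ) :
    μ (cube3 j k) ≤ ∑ e ∈ E3 d, μ (dyadicCube j (fun i => k i + e i)) :=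
  (measure_mono (cube3_subset_biUnion j k)).trans (measure_biUnion_finset_le _ _)

lemma mleader_le_sum (j : ℕ) (k : Fin d → ℤ) :
    mleader μ j k ≤ ∑ e ∈ E3 d, μ (dyadicCube j (fun i => k i + e i)) :=
  (mleader_le μ subset_rfl).trans (measure_cube3_le μ j k)

lemma exists_neighbor_ne_zero {j : ℕ} {k : Fin d → ℤ} (h : mleader μ j k ≠ 0) :
    ∃ e ∈ E3 d, μ (dyadicCube j (fun i => k i + e i)) ≠ 0 := by
  by_contra hc
  push_neg at hc
  have : ∑ e ∈ E3 d, μ (dyadicCube j (fun i => k i + e i)) = 0 :=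
    Finset.sum_eq_zero hc
  exact h (le_antisymm (le_trans (mleader_le_sum μ j k) this.le) (zero_le))

lemma E3_mem_bounds {e : Fin d → ℤ} (he : e ∈ E3 d) : ∀ i, -1 ≤ e i ∧ e i ≤ 1 := by
  rw [E3, Fintype.mem_piFinset] at he
  intro i
  have := he i
  rwa [Finset.mem_Icc] at this

/-- rpow is antitone in the base for nonpositive exponents. -/
lemma rpow_antitone {x y : ℝ≥0∞} {q : ℝ} (hq : q ≤ 0) (hxy : x ≤ y) : y ^ q ≤ x ^ q := by
  have h1 : y ^ q = (y ^ (-q))⁻¹ := by rw [← ENNReal.rpow_neg, neg_neg]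
  have h2 : x ^ q = (x ^ (-q))⁻¹ := by rw [← ENNReal.rpow_neg, neg_neg]
  rw [h1, h2]
  exact ENNReal.inv_le_inv.mpr (ENNReal.rpow_le_rpow hxy (neg_nonneg.mpr hq))

lemma one_le_rpow_nonpos {x : ℝ≥0∞} {q : ℝ} (hx : x ≤ 1) (hq : q ≤ 0) : 1 ≤ x ^ q := by
  have := rpow_antitone (x := x) (y := 1) hq hx
  rwa [ENNReal.one_rpow] at this

lemma rpow_ne_top' {x : ℝ≥0∞} (h0 : x ≠ 0) (ht : x ≠ ⊤) (q : ℝ) : x ^ q ≠ ⊤ := by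
  simp [ENNReal.rpow_eq_top_iff, h0, ht]

lemma rpow_ne_zero' {x : ℝ≥0∞} (h0 : x ≠ 0) (ht : x ≠ ⊤) (q : ℝ) : x ^ q ≠ 0 := by
  simp [ENNReal.rpow_eq_zero_iff, h0, ht]

/-- index windows -/
def Gfin (d j : ℕ) : Finset (Fin d → ℤ) := Fintype.piFinset (fun _ : Fin d => Finset.Icc (-1 : ℤ) (2^j))
def Gfin' (d j : ℕ) : Finset (Fin d → ℤ) :=
  Fintype.piFinset (fun _ : Fin d => Finset.Icc (-2 : ℤ) (2^j + 1))

variable (hμ : μ ((unitCube d)ᶜ) = 0)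

include hμ in
lemma measure_eq_zero_of_notmem {j : ℕ} {k : Fin d → ℤ} (hk : k ∉ Gfin d j) :
    μ (dyadicCube j k) = 0 :=
  measure_mono_null (dyadic_disjoint_unit hk) hμ

include hμ in
lemma mleader_eq_zero_of_notmem {j : ℕ} {k : Fin d → ℤ} (hk : k ∉ Gfin' d j) :
    mleader μ j k = 0 :=
  le_antisymm (le_trans (mleader_le μ subset_rfl)
    (le_of_eq (measure_mono_null (cube3_disjoint_unit hk) hμ))) (zero_le)

include hμ in
lemma tauSum_eq_sum (q : ℝ) (j : ℕ) :
    tauSum μ q j = ∑ k ∈ Gfin d j,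
      (if μ (dyadicCube j k) = 0 then 0 else μ (dyadicCube j k) ^ q) := by
  refine tsum_eq_sum ?_
  intro k hk
  rw [if_pos (measure_eq_zero_of_notmem μ hμ hk)]

include hμ in
lemma leaderSum_eq_sum (q : ℝ) (j : ℕ) :
    leaderSum μ q j = ∑ k ∈ Gfin' d j,
      (if mleader μ j k = 0 then 0 else mleader μ j k ^ q) := by
  refine tsum_eq_sum ?_
  intro k hk
  rw [if_pos (mleader_eq_zero_of_notmem μ hμ hk)]

include hμ in
lemma tauSum_ne_top (q : ℝ) (j : ℕ) : tauSum μ q j ≠ ⊤ := by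
  rw [tauSum_eq_sum μ hμ q j]
  refine (ENNReal.sum_lt_top.mpr ?_).ne
  intro k _
  split_ifs with h
  · exact ENNReal.zero_lt_top
  · exact (rpow_ne_top' h (measure_ne_top μ _) q).lt_top

include hμ in
lemma leaderSum_ne_top (q : ℝ) (j : ℕ) : leaderSum μ q j ≠ ⊤ := by
  rw [leaderSum_eq_sum μ hμ q j]
  refine (ENNReal.sum_lt_top.mpr ?_).ne
  intro k _
  split_ifs with h
  · exact ENNReal.zero_lt_top
  · exact (rpow_ne_top' h (ne_top_of_le_ne_top one_ne_top (mleader_le_one μ)) q).lt_top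

include hμ in
lemma exists_cube_ne_zero (j : ℕ) : ∃ k : Fin d → ℤ, μ (dyadicCube j k) ≠ 0 := by
  have h1 : (1 : ℝ≥0∞) ≤ μ (unitCube d) := by
    have h := measure_union_le (μ := μ) (unitCube d) (unitCube d)ᶜ
    rw [Set.union_compl_self, measure_univ, hμ, add_zero] at h
    exact h
  by_contra hc
  push_neg at hc
  have h2 : μ (unitCube d) ≤ ∑ k ∈ Gfin d j, μ (dyadicCube j k) :=
    (measure_mono (unitCube_subset j)).trans (measure_biUnion_finset_le _ _)
  rw [Finset.sum_eq_zero (fun k _ => hc k)] at h2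
  exact one_ne_zero (le_antisymm (h1.trans h2) (zero_le))

include hμ in
lemma tauSum_ne_zero (q : ℝ) (j : ℕ) : tauSum μ q j ≠ 0 := by
  obtain ⟨k, hk⟩ := exists_cube_ne_zero μ hμ j
  intro hc
  have hle := ENNReal.le_tsum (f := fun k =>
    if μ (dyadicCube j k) = 0 then 0 else μ (dyadicCube j k) ^ q) k
  rw [if_neg hk] at hle
  exact rpow_ne_zero' hk (measure_ne_top μ _) q
    (le_antisymm (hle.trans hc.le) (zero_le))

include hμ in
lemma leaderSum_ne_zero (q : ℝ) (j : ℕ) : leaderSum μ q j ≠ 0 := by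
  obtain ⟨k, hk⟩ := exists_cube_ne_zero μ hμ j
  have hml : mleader μ j k ≠ 0 := fun hc =>
    hk (le_antisymm ((self_le_mleader μ).trans hc.le) (zero_le))
  intro hc
  have hle := ENNReal.le_tsum (f := fun k =>
    if mleader μ j k = 0 then 0 else mleader μ j k ^ q) k
  rw [if_neg hml] at hle
  exact rpow_ne_zero' hml (ne_top_of_le_ne_top one_ne_top (mleader_le_one μ)) q
    (le_antisymm (hle.trans hc.le) (zero_le))

include hμ in
lemma one_le_leaderSum {q : ℝ} (hq : q ≤ 0) (j : ℕ) : 1 ≤ leaderSum μ q j := by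
  obtain ⟨k, hk⟩ := exists_cube_ne_zero μ hμ j
  have hml : mleader μ j k ≠ 0 := fun hc =>
    hk (le_antisymm ((self_le_mleader μ).trans hc.le) (zero_le))
  have hle := ENNReal.le_tsum (f := fun k =>
    if mleader μ j k = 0 then 0 else mleader μ j k ^ q) k
  rw [if_neg hml] at hle
  exact le_trans (one_le_rpow_nonpos (mleader_le_one μ) hq) hle

end Meas
set_option maxHeartbeats 1000000


section Comp
variable {d : ℕ} (μ : Measure (Rd d)) [IsProbabilityMeasure μ]

/-- `q ≥ 0`: the tau sum is dominated by the leader sum. -/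
lemma tauSum_le_leaderSum {q : ℝ} (hq : 0 ≤ q) (j : ℕ) : tauSum μ q j ≤ leaderSum μ q j := by
  refine ENNReal.tsum_le_tsum fun k => ?_
  by_cases h : μ (dyadicCube j k) = 0
  · rw [if_pos h]; exact zero_le
  · have hml : mleader μ j k ≠ 0 := fun hc =>
      h (le_antisymm ((self_le_mleader μ).trans hc.le) (zero_le))
    rw [if_neg h, if_neg hml]
    exact ENNReal.rpow_le_rpow (self_le_mleader μ) hq

/-- shift-invariance of the tau sum terms. -/
lemma tsum_tterm_shift (q : ℝ) (j : ℕ) (e : Fin d → ℤ) :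
    (∑' k : Fin d → ℤ, (if μ (dyadicCube j (fun i => k i + e i)) = 0 then 0
      else μ (dyadicCube j (fun i => k i + e i)) ^ q)) = tauSum μ q j := by
  have := (Equiv.addRight e).tsum_eq (fun k : Fin d → ℤ =>
    (if μ (dyadicCube j k) = 0 then 0 else μ (dyadicCube j k) ^ q))
  exact this

/-- `q ≥ 0`: the leader sum is dominated by a constant times the tau sum. -/
lemma leaderSum_le_tauSum_pos {q : ℝ} (hq : 0 ≤ q) (j : ℕ) :
    leaderSum μ q j ≤ ((3:ℝ≥0∞) ^ d) ^ q * 3 ^ d * tauSum μ q j := by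
  have key : ∀ k : Fin d → ℤ, (if mleader μ j k = 0 then 0 else mleader μ j k ^ q) ≤
      ((3:ℝ≥0∞) ^ d) ^ q * ∑ e ∈ E3 d, (if μ (dyadicCube j (fun i => k i + e i)) = 0 then 0
        else μ (dyadicCube j (fun i => k i + e i)) ^ q) := by
    intro k
    by_cases h : mleader μ j k = 0
    · rw [if_pos h]; exact zero_le
    rw [if_neg h]
    obtain ⟨e₀, he₀, hub⟩ := Finset.exists_max_image (E3 d)
      (fun e => μ (dyadicCube j (fun i => k i + e i))) E3_nonempty
    have hcard : ∑ e ∈ E3 d, μ (dyadicCube j (fun i => k i + e i)) ≤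
        (3:ℝ≥0∞) ^ d * μ (dyadicCube j (fun i => k i + e₀ i)) := by
      calc ∑ e ∈ E3 d, μ (dyadicCube j (fun i => k i + e i))
          ≤ ∑ _e ∈ E3 d, μ (dyadicCube j (fun i => k i + e₀ i)) := Finset.sum_le_sum hub
        _ = (E3 d).card • μ (dyadicCube j (fun i => k i + e₀ i)) := Finset.sum_const _
        _ = (3:ℝ≥0∞) ^ d * μ (dyadicCube j (fun i => k i + e₀ i)) := by
            rw [nsmul_eq_mul, E3_card]
            push_cast
            ring
    have hml_le : mleader μ j k ≤ (3:ℝ≥0∞) ^ d * μ (dyadicCube j (fun i => k i + e₀ i)) :=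
      (mleader_le_sum μ j k).trans hcard
    have hμe₀ : μ (dyadicCube j (fun i => k i + e₀ i)) ≠ 0 := by
      intro hc
      rw [hc, mul_zero] at hml_le
      exact h (le_antisymm hml_le (zero_le))
    have step1 : mleader μ j k ^ q ≤
        ((3:ℝ≥0∞) ^ d) ^ q * μ (dyadicCube j (fun i => k i + e₀ i)) ^ q := by
      calc mleader μ j k ^ q ≤ ((3:ℝ≥0∞) ^ d * μ (dyadicCube j (fun i => k i + e₀ i))) ^ q :=
            ENNReal.rpow_le_rpow hml_le hq
        _ = _ := ENNReal.mul_rpow_of_nonneg _ _ hq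
    refine step1.trans (mul_le_mul_right ?_ _)
    calc μ (dyadicCube j (fun i => k i + e₀ i)) ^ q
        = (if μ (dyadicCube j (fun i => k i + e₀ i)) = 0 then 0
          else μ (dyadicCube j (fun i => k i + e₀ i)) ^ q) := by rw [if_neg hμe₀]
      _ ≤ _ := Finset.single_le_sum (f := fun e =>
          (if μ (dyadicCube j (fun i => k i + e i)) = 0 then 0
            else μ (dyadicCube j (fun i => k i + e i)) ^ q)) (fun e _ => zero_le) he₀
  calc leaderSum μ q j ≤ ∑' k : Fin d → ℤ, ((3:ℝ≥0∞) ^ d) ^ q *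
        ∑ e ∈ E3 d, (if μ (dyadicCube j (fun i => k i + e i)) = 0 then 0
          else μ (dyadicCube j (fun i => k i + e i)) ^ q) := ENNReal.tsum_le_tsum key
    _ = ((3:ℝ≥0∞) ^ d) ^ q * ∑' k : Fin d → ℤ,
        ∑ e ∈ E3 d, (if μ (dyadicCube j (fun i => k i + e i)) = 0 then 0
          else μ (dyadicCube j (fun i => k i + e i)) ^ q) := ENNReal.tsum_mul_left
    _ = ((3:ℝ≥0∞) ^ d) ^ q * ∑ e ∈ E3 d, ∑' k : Fin d → ℤ,
        (if μ (dyadicCube j (fun i => k i + e i)) = 0 then 0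
          else μ (dyadicCube j (fun i => k i + e i)) ^ q) := by
        rw [Summable.tsum_finsetSum (fun i _ => ENNReal.summable)]
    _ = ((3:ℝ≥0∞) ^ d) ^ q * ∑ e ∈ E3 d, tauSum μ q j := by
        congr 1
        exact Finset.sum_congr rfl fun e _ => tsum_tterm_shift μ q j e
    _ = ((3:ℝ≥0∞) ^ d) ^ q * 3 ^ d * tauSum μ q j := by
        rw [Finset.sum_const, E3_card, nsmul_eq_mul, mul_assoc]
        push_cast
        ring_nf
  -- done

/-- `q ≤ 0`: the leader sum is dominated by `3^d` times the tau sum. -/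
lemma leaderSum_le_tauSum_neg {q : ℝ} (hq : q ≤ 0) (j : ℕ) :
    leaderSum μ q j ≤ 3 ^ d * tauSum μ q j := by
  have key : ∀ k : Fin d → ℤ, (if mleader μ j k = 0 then 0 else mleader μ j k ^ q) ≤
      ∑ e ∈ E3 d, (if μ (dyadicCube j (fun i => k i + e i)) = 0 then 0
        else μ (dyadicCube j (fun i => k i + e i)) ^ q) := by
    intro k
    by_cases h : mleader μ j k = 0
    · rw [if_pos h]; exact zero_le
    rw [if_neg h]
    obtain ⟨e₀, he₀, hμe₀⟩ := exists_neighbor_ne_zero μ h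
    have hle : μ (dyadicCube j (fun i => k i + e₀ i)) ≤ mleader μ j k :=
      le_mleader μ (dyadic_subset_cube3 (E3_mem_bounds he₀))
    calc mleader μ j k ^ q ≤ μ (dyadicCube j (fun i => k i + e₀ i)) ^ q := rpow_antitone hq hle
      _ = (if μ (dyadicCube j (fun i => k i + e₀ i)) = 0 then 0
            else μ (dyadicCube j (fun i => k i + e₀ i)) ^ q) := by rw [if_neg hμe₀]
      _ ≤ _ := Finset.single_le_sum (f := fun e =>
          (if μ (dyadicCube j (fun i => k i + e i)) = 0 then 0
            else μ (dyadicCube j (fun i => k i + e i)) ^ q)) (fun e _ => zero_le) he₀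
  calc leaderSum μ q j ≤ ∑' k : Fin d → ℤ,
        ∑ e ∈ E3 d, (if μ (dyadicCube j (fun i => k i + e i)) = 0 then 0
          else μ (dyadicCube j (fun i => k i + e i)) ^ q) := ENNReal.tsum_le_tsum key
    _ = ∑ e ∈ E3 d, ∑' k : Fin d → ℤ,
        (if μ (dyadicCube j (fun i => k i + e i)) = 0 then 0
          else μ (dyadicCube j (fun i => k i + e i)) ^ q) := by
        rw [Summable.tsum_finsetSum (fun i _ => ENNReal.summable)]
    _ = ∑ e ∈ E3 d, tauSum μ q j := Finset.sum_congr rfl fun e _ => tsum_tterm_shift μ q j e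
    _ = 3 ^ d * tauSum μ q j := by
        rw [Finset.sum_const, E3_card, nsmul_eq_mul]
        push_cast
        ring_nf

lemma exists_child_ne_zero {j : ℕ} {k : Fin d → ℤ} (h : μ (dyadicCube j k) ≠ 0) :
    ∃ e : Fin d → ℤ, (∀ i, 0 ≤ e i ∧ e i ≤ 1) ∧
      μ (dyadicCube (j+1) (fun i => 2 * k i + e i)) ≠ 0 := by
  by_contra hc
  push_neg at hc
  have hz : ∀ e ∈ Fintype.piFinset (fun _ : Fin d => Finset.Icc (0 : ℤ) 1),
      μ (dyadicCube (j+1) (fun i => 2 * k i + e i)) = 0 := by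
    intro e he
    rw [Fintype.mem_piFinset] at he
    refine hc e fun i => ?_
    have := he i
    rwa [Finset.mem_Icc] at this
  have h2 : μ (dyadicCube j k) ≤ ∑ e ∈ Fintype.piFinset (fun _ : Fin d => Finset.Icc (0 : ℤ) 1),
      μ (dyadicCube (j+1) (fun i => 2 * k i + e i)) :=
    (measure_mono (dyadic_subset_children j k)).trans (measure_biUnion_finset_le _ _)
  rw [Finset.sum_eq_zero hz] at h2
  exact h (le_antisymm h2 (zero_le))

/-- `q ≤ 0`: the tau sum at generation `j` is dominated by the leader sum at generation `j+2`. -/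
lemma tauSum_le_leaderSum_shift {q : ℝ} (hq : q ≤ 0) (j : ℕ) :
    tauSum μ q j ≤ leaderSum μ q (j+2) := by
  classical
  set ee : (Fin d → ℤ) → (Fin d → ℤ) := fun k =>
    if h : μ (dyadicCube j k) ≠ 0 then Classical.choose (exists_child_ne_zero μ h)
    else fun _ => 0 with hee
  have hbounds : ∀ k i, 0 ≤ ee k i ∧ ee k i ≤ 1 := by
    intro k i
    by_cases h : μ (dyadicCube j k) ≠ 0
    · rw [hee]; simp only [dif_pos h]
      exact (Classical.choose_spec (exists_child_ne_zero μ h)).1 i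
    · rw [hee]; simp only [dif_neg h]; norm_num
  set K : (Fin d → ℤ) → (Fin d → ℤ) := fun k => fun i => 4 * k i + 1 + ee k i with hK
  have hKinj : Function.Injective K := by
    intro k k' hkk
    funext i
    have h1 := congrFun hkk i
    simp only [hK] at h1
    have b1 := hbounds k i
    have b2 := hbounds k' i
    omega
  have hterm : ∀ k : Fin d → ℤ,
      (if μ (dyadicCube j k) = 0 then 0 else μ (dyadicCube j k) ^ q) ≤
      (fun k' => if mleader μ (j+2) k' = 0 then 0 else mleader μ (j+2) k' ^ q) (K k) := by
    intro k
    by_cases h : μ (dyadicCube j k) = 0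
    · rw [if_pos h]; exact zero_le
    have hch : μ (dyadicCube (j+1) (fun i => 2 * k i + ee k i)) ≠ 0 := by
      have : ee k = Classical.choose (exists_child_ne_zero μ h) := by
        rw [hee]; simp only [dif_pos h]
      rw [this]
      exact (Classical.choose_spec (exists_child_ne_zero μ h)).2
    have hsub1 : cube3 (j+2) (K k) ⊆ dyadicCube j k :=
      cube3_grandchild_subset j k (ee k) (hbounds k)
    have hsub2 : dyadicCube (j+1) (fun i => 2 * k i + ee k i) ⊆ cube3 (j+2) (K k) :=
      child_subset_cube3_grandchild j k (ee k) (hbounds k)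
    have hml_ne : mleader μ (j+2) (K k) ≠ 0 := fun hc =>
      hch (le_antisymm ((le_mleader μ hsub2).trans hc.le) (zero_le))
    have hml_le : mleader μ (j+2) (K k) ≤ μ (dyadicCube j k) := mleader_le μ hsub1
    simp only
    rw [if_neg h, if_neg hml_ne]
    exact rpow_antitone hq hml_le
  calc tauSum μ q j ≤ ∑' k : Fin d → ℤ,
        (fun k' => if mleader μ (j+2) k' = 0 then 0 else mleader μ (j+2) k' ^ q) (K k) :=
        ENNReal.tsum_le_tsum hterm
    _ ≤ leaderSum μ q (j+2) := ENNReal.tsum_comp_le_tsum_of_injective hKinj _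

end Comp

section Lim

lemma ereal_le_liminf_of_forall_eps (x : ℝ) (b : ℕ → ℝ)
    (h : ∀ ε : ℝ, 0 < ε → ∀ᶠ j in atTop, x - ε ≤ b j) :
    (x : EReal) ≤ liminf (fun j => ((b j : ℝ) : EReal)) atTop := by
  by_contra hc
  push_neg at hc
  obtain ⟨y, hy1, hy2⟩ := EReal.lt_iff_exists_real_btwn.mp hc
  have hyx : y < x := by exact_mod_cast hy2
  have hev := h (x - y) (by linarith)
  have hle : (y : EReal) ≤ liminf (fun j => ((b j : ℝ) : EReal)) atTop := by
    refine le_liminf_of_le (by isBoundedDefault) ?_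
    filter_upwards [hev] with j hj
    have : y ≤ b j := by linarith
    exact_mod_cast this
  exact absurd (hle.trans_lt hy1) (lt_irrefl _)

lemma liminf_le_liminf_of (a b : ℕ → ℝ)
    (H : ∀ x : ℝ, ∀ ε : ℝ, 0 < ε → (∀ᶠ j in atTop, x < a j) → (∀ᶠ j in atTop, x - ε ≤ b j)) :
    liminf (fun j => ((a j : ℝ) : EReal)) atTop ≤ liminf (fun j => ((b j : ℝ) : EReal)) atTop := by
  by_contra hc
  push_neg at hc
  obtain ⟨x, hx1, hx2⟩ := EReal.lt_iff_exists_real_btwn.mp hc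
  have hev : ∀ᶠ j in atTop, x < a j := by
    have h2 := eventually_lt_of_lt_liminf hx2
    filter_upwards [h2] with j hj
    exact_mod_cast hj
  have hx_le := ereal_le_liminf_of_forall_eps x b (fun ε hε => H x ε hε hev)
  exact absurd (hx_le.trans_lt hx1) (lt_irrefl _)

lemma eventually_div_le (c ε : ℝ) (hε : 0 < ε) : ∀ᶠ j : ℕ in atTop, c / (j:ℝ) ≤ ε :=
  (tendsto_const_div_atTop_nhds_zero_nat c).eventually (eventually_le_nhds hε)

/-- generic comparison : if `a j ≤ b j + c / j` for `j ≥ 1` then `liminf a ≤ liminf b`. -/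
lemma liminf_le_liminf_of_le_add_div (a b : ℕ → ℝ) (c : ℝ)
    (hab : ∀ j : ℕ, 1 ≤ j → a j ≤ b j + c / (j:ℝ)) :
    liminf (fun j => ((a j : ℝ) : EReal)) atTop ≤ liminf (fun j => ((b j : ℝ) : EReal)) atTop := by
  refine liminf_le_liminf_of a b ?_
  intro x ε hε hev
  filter_upwards [hev, eventually_div_le c ε hε, eventually_ge_atTop 1] with j hj hjs hj1
  have := hab j hj1
  linarith

lemma coe_fun_eq (S : ℕ → ℝ≥0∞) (hS0 : ∀ j, S j ≠ 0) (hST : ∀ j, S j ≠ ⊤) :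
    (fun j : ℕ => (((-1 : ℝ) / (j : ℝ) : ℝ) : EReal) * (elog (S j) / ((Real.log 2 : ℝ) : EReal)))
    = fun j : ℕ =>
        ((((-1 : ℝ) / (j : ℝ)) * (Real.log (S j).toReal / Real.log 2) : ℝ) : EReal) := by
  funext j
  rw [elog, if_neg (hS0 j), if_neg (hST j), ← EReal.coe_div, ← EReal.coe_mul]

end Lim

end LT1

/-- For a probability measure `μ` on `[0,1]^d` and the function `F_μ` with
wavelet coefficients `d_λ = μ(λ)`, the wavelet-leader scaling function of `F_μ` coincides with
the `L^q`-spectrum of `μ`: `L_{F_μ}(q) = τ_μ(q)` for all `q ∈ ℝ`. -/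
theorem leaderScaling_eq_tauMu (d : ℕ) (μ : Measure (Rd d)) [IsProbabilityMeasure μ]
    (hμ : μ ((unitCube d)ᶜ) = 0) :
    ∀ q : ℝ, leaderScaling μ q = tauMu μ q := by
  intro q
  have hl2 : (0:ℝ) < Real.log 2 := Real.log_pos one_lt_two
  have hl2' : Real.log 2 ≠ 0 := hl2.ne'
  have ht0 : ∀ j, tauSum μ q j ≠ 0 := LT1.tauSum_ne_zero μ hμ q
  have htT : ∀ j, tauSum μ q j ≠ ⊤ := LT1.tauSum_ne_top μ hμ q
  have hlo : ∀ j, leaderSum μ q j ≠ 0 := LT1.leaderSum_ne_zero μ hμ q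
  have hlT : ∀ j, leaderSum μ q j ≠ ⊤ := LT1.leaderSum_ne_top μ hμ q
  set T : ℕ → ℝ := fun j => Real.log (tauSum μ q j).toReal with hT
  set L : ℕ → ℝ := fun j => Real.log (leaderSum μ q j).toReal with hL
  set a : ℕ → ℝ := fun j => ((-1 : ℝ) / (j : ℝ)) * (T j / Real.log 2) with ha
  set b : ℕ → ℝ := fun j => ((-1 : ℝ) / (j : ℝ)) * (L j / Real.log 2) with hb
  have hrw1 : leaderScaling μ q = liminf (fun j => ((b j : ℝ) : EReal)) atTop := by
    rw [leaderScaling, LT1.coe_fun_eq _ hlo hlT]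
  have hrw2 : tauMu μ q = liminf (fun j => ((a j : ℝ) : EReal)) atTop := by
    rw [tauMu, LT1.coe_fun_eq _ ht0 htT]
  rw [hrw1, hrw2]
  have tpos : ∀ j, 0 < (tauSum μ q j).toReal := fun j => ENNReal.toReal_pos (ht0 j) (htT j)
  have lpos : ∀ j, 0 < (leaderSum μ q j).toReal := fun j => ENNReal.toReal_pos (hlo j) (hlT j)
  -- if `leaderSum ≤ C * tauSum` then `L ≤ log C + T`
  have hconst : ∀ (C : ℝ≥0∞), C ≠ 0 → C ≠ ⊤ →
      (∀ j, leaderSum μ q j ≤ C * tauSum μ q j) →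
      ∀ j, L j ≤ Real.log C.toReal + T j := by
    intro C hC0 hCT hcmp j
    have h1 : (leaderSum μ q j).toReal ≤ C.toReal * (tauSum μ q j).toReal := by
      rw [← ENNReal.toReal_mul]
      exact (ENNReal.toReal_le_toReal (hlT j) (ENNReal.mul_ne_top hCT (htT j))).mpr (hcmp j)
    calc L j ≤ Real.log (C.toReal * (tauSum μ q j).toReal) := Real.log_le_log (lpos j) h1
      _ = Real.log C.toReal + T j :=
        Real.log_mul (ENNReal.toReal_pos hC0 hCT).ne' (tpos j).ne'
  -- direction `liminf a ≤ liminf b` whenever `L ≤ c + T`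
  have dir_easy : ∀ c : ℝ, (∀ j, L j ≤ c + T j) →
      liminf (fun j => ((a j : ℝ) : EReal)) atTop ≤
        liminf (fun j => ((b j : ℝ) : EReal)) atTop := by
    intro c hc
    refine LT1.liminf_le_liminf_of_le_add_div a b (c / Real.log 2) ?_
    intro j hj1
    have hj0 : (0:ℝ) < (j:ℝ) := by exact_mod_cast hj1
    have hLTj := hc j
    have hd : a j - b j = (L j - T j) / Real.log 2 / (j:ℝ) := by
      simp only [ha, hb]
      field_simp
      ring
    have hd2 : (L j - T j) / Real.log 2 / (j:ℝ) ≤ c / Real.log 2 / (j:ℝ) :=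
      (div_le_div_iff_of_pos_right hj0).mpr ((div_le_div_iff_of_pos_right hl2).mpr (by linarith))
    linarith
  rcases le_total 0 q with hq | hq
  · -- case `0 ≤ q`
    have h3d0 : ((3:ℝ≥0∞)^d) ≠ 0 := pow_ne_zero d (by norm_num)
    have h3dT : ((3:ℝ≥0∞)^d) ≠ ⊤ := ENNReal.pow_ne_top (by norm_num)
    have hC0 : ((3:ℝ≥0∞) ^ d) ^ q * 3 ^ d ≠ 0 :=
      mul_ne_zero (LT1.rpow_ne_zero' h3d0 h3dT q) h3d0
    have hCT : ((3:ℝ≥0∞) ^ d) ^ q * 3 ^ d ≠ ⊤ :=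
      ENNReal.mul_ne_top (LT1.rpow_ne_top' h3d0 h3dT q) h3dT
    have hLc := hconst _ hC0 hCT (LT1.leaderSum_le_tauSum_pos μ hq)
    apply le_antisymm
    · -- `b ≤ a` pointwise
      refine LT1.liminf_le_liminf_of_le_add_div b a 0 ?_
      intro j hj1
      have hj0 : (0:ℝ) < (j:ℝ) := by exact_mod_cast hj1
      have hTLj : T j ≤ L j := Real.log_le_log (tpos j)
        ((ENNReal.toReal_le_toReal (htT j) (hlT j)).mpr (LT1.tauSum_le_leaderSum μ hq j))
      have hd : b j - a j = (T j - L j) / Real.log 2 / (j:ℝ) := by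
        simp only [ha, hb]
        field_simp
        ring
      have hd2 : (T j - L j) / Real.log 2 / (j:ℝ) ≤ 0 :=
        div_nonpos_of_nonpos_of_nonneg
          (div_nonpos_of_nonpos_of_nonneg (by linarith) hl2.le) hj0.le
      have h00 : (0:ℝ)/(j:ℝ) = 0 := zero_div _
      linarith
    · exact dir_easy _ hLc
  · -- case `q ≤ 0`
    have h3d0 : ((3:ℝ≥0∞)^d) ≠ 0 := pow_ne_zero d (by norm_num)
    have h3dT : ((3:ℝ≥0∞)^d) ≠ ⊤ := ENNReal.pow_ne_top (by norm_num)
    have hLc := hconst _ h3d0 h3dT (LT1.leaderSum_le_tauSum_neg μ hq)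
    apply le_antisymm
    · -- the hard direction, using the generation shift
      refine LT1.liminf_le_liminf_of b a ?_
      intro x ε hε hev
      have hTL2 : ∀ j, T j ≤ L (j+2) := fun j => Real.log_le_log (tpos j)
        ((ENNReal.toReal_le_toReal (htT j) (hlT (j+2))).mpr (LT1.tauSum_le_leaderSum_shift μ hq j))
      have hL0 : ∀ j, 0 ≤ L j := by
        intro j
        refine Real.log_nonneg ?_
        have h1 := LT1.one_le_leaderSum μ hμ hq j
        have h2 := (ENNReal.toReal_le_toReal ENNReal.one_ne_top (hlT j)).mpr h1
        simpa using h2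
      have hb_nonpos : ∀ j : ℕ, b j ≤ 0 := by
        intro j
        simp only [hb]
        apply mul_nonpos_of_nonpos_of_nonneg
        · apply div_nonpos_of_nonpos_of_nonneg (by norm_num)
          positivity
        · exact div_nonneg (hL0 j) hl2.le
      have hx0 : x < 0 := by
        obtain ⟨j, hj⟩ := hev.exists
        exact lt_of_lt_of_le hj (hb_nonpos j)
      obtain ⟨N, hN⟩ := eventually_atTop.mp hev
      filter_upwards [eventually_ge_atTop N, eventually_ge_atTop 1,
        LT1.eventually_div_le (-2*x) ε hε] with j hjN hj1 hjs
      have hj0 : (0:ℝ) < (j:ℝ) := by exact_mod_cast hj1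
      have hj0' : (j:ℝ) ≠ 0 := hj0.ne'
      have hj2 : (0:ℝ) < ((j:ℝ) + 2) := by linarith
      have hbj2 : x < b (j+2) := hN (j+2) (by omega)
      have hL2 : L (j+2) < (-x) * (((j:ℝ)+2) * Real.log 2) := by
        have hid : b (j+2) = -(L (j+2)) / (((j:ℝ)+2) * Real.log 2) := by
          simp only [hb]
          push_cast
          field_simp
        rw [hid, lt_div_iff₀ (by positivity)] at hbj2
        nlinarith [hbj2]
      have hTj := hTL2 j
      have haj : a j = -(T j) / ((j:ℝ) * Real.log 2) := by
        simp only [ha]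
        field_simp
      have h1 : -(L (j+2)) / ((j:ℝ) * Real.log 2) ≤ -(T j) / ((j:ℝ) * Real.log 2) :=
        (div_le_div_iff_of_pos_right (by positivity)).mpr (by linarith)
      have h2 : -((-x) * (((j:ℝ)+2) * Real.log 2)) / ((j:ℝ) * Real.log 2) ≤
          -(L (j+2)) / ((j:ℝ) * Real.log 2) :=
        (div_le_div_iff_of_pos_right (by positivity)).mpr (by linarith)
      have h3 : -((-x) * (((j:ℝ)+2) * Real.log 2)) / ((j:ℝ) * Real.log 2) = x + 2*x/(j:ℝ) := by
        field_simp
      have h4 : 2*x/(j:ℝ) = -((-2*x)/(j:ℝ)) := by ring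
      linarith
    · exact dir_easy _ hLc
end
end
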